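/- Every maximal clique of routes of G(H) with respect to the canonical bipartite framing has cardinality exactly n + m + |E|. -/
import Mathlib


open Finset Filter Pointwise

/-- Neighbors in the right shore `T` of a left vertex `i`. -/
def Nbr (E : Finset (ℕ × ℕ)) (i : ℕ) : Finset ℕ :=
  (E.filter (fun p => p.1 = i)).image Prod.snd

/-- Neighbors in the left shore `S` of a right vertex `j`. -/
def Nbr' (E : Finset (ℕ × ℕ)) (j : ℕ) : Finset ℕ :=
  (E.filter (fun p => p.2 = j)).image Prod.fst

/-- A route of `G(H)`: a triple `(a, (i,j), c)` with `a, c ∈ {1,2}`, `(i,j) ∈ E`,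
representing the path `α_{a,i} β_{i,j} γ_{j,c}`. -/
abbrev Route : Type := ℕ × (ℕ × ℕ) × ℕ

def IsRoute (E : Finset (ℕ × ℕ)) (r : Route) : Prop :=
  (r.1 = 1 ∨ r.1 = 2) ∧ r.2.1 ∈ E ∧ (r.2.2 = 1 ∨ r.2.2 = 2)

/-- Two routes are in conflict with respect to the canonical bipartite framing. -/
def Conflict (r r' : Route) : Prop :=
  (r.2.1 = r'.2.1 ∧
    ((r.1 = 1 ∧ r.2.2 = 2 ∧ r'.1 = 2 ∧ r'.2.2 = 1) ∨
     (r.1 = 2 ∧ r.2.2 = 1 ∧ r'.1 = 1 ∧ r'.2.2 = 2))) ∨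
  (r.2.1.1 = r'.2.1.1 ∧ r.2.1.2 ≠ r'.2.1.2 ∧
    ((r.2.1.2 < r'.2.1.2 ∧ r'.1 = 1 ∧ r.1 = 2) ∨
     (r'.2.1.2 < r.2.1.2 ∧ r.1 = 1 ∧ r'.1 = 2))) ∨
  (r.2.1.2 = r'.2.1.2 ∧ r.2.1.1 ≠ r'.2.1.1 ∧
    ((r.2.1.1 < r'.2.1.1 ∧ r.2.2 = 2 ∧ r'.2.2 = 1) ∨
     (r'.2.1.1 < r.2.1.1 ∧ r'.2.2 = 2 ∧ r.2.2 = 1)))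

/-- A clique: a set of pairwise coherent routes. -/
def IsClique (E : Finset (ℕ × ℕ)) (C : Set Route) : Prop :=
  (∀ r ∈ C, IsRoute E r) ∧ ∀ r ∈ C, ∀ r' ∈ C, r ≠ r' → ¬ Conflict r r'

/-- A maximal clique of routes. -/
def IsMaxClique (E : Finset (ℕ × ℕ)) (C : Set Route) : Prop :=
  IsClique E C ∧ ∀ C' : Set Route, IsClique E C' → C ⊆ C' → C' = C


-- auxiliary lemmas
lemma conflict_symm {r r' : Route} (h : Conflict r r') : Conflict r' r := by
  unfold Conflict at *
  obtain ⟨h1, h2⟩ | ⟨h1, h2, h3⟩ | ⟨h1, h2, h3⟩ := h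
  · exact Or.inl ⟨h1.symm, by tauto⟩
  · exact Or.inr (Or.inl ⟨h1.symm, h2.symm, by tauto⟩)
  · exact Or.inr (Or.inr ⟨h1.symm, h2.symm, by tauto⟩)

lemma conflict_irrefl (r : Route) : ¬ Conflict r r := by
  unfold Conflict; intro h; rcases h with ⟨-, h⟩ | ⟨-, h, -⟩ | ⟨-, h, -⟩ <;> omega

lemma mem_of_no_conflict {E : Finset (ℕ × ℕ)} {C : Set Route} (hC : IsMaxClique E C)
    {r : Route} (hr : IsRoute E r) (h : ∀ r' ∈ C, ¬ Conflict r r') : r ∈ C := by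
  have hclique : IsClique E (insert r C) := by
    constructor
    · rintro x (rfl | hx)
      · exact hr
      · exact hC.1.1 x hx
    · rintro x (rfl | hx) y (rfl | hy) hne
      · exact absurd rfl hne
      · exact h y hy
      · exact fun hc => h x hx (conflict_symm hc)
      · exact hC.1.2 x hx y hy hne
  have := hC.2 _ hclique (Set.subset_insert r C)
  rw [← this]; exact Set.mem_insert r C

lemma mem_Nbr {E : Finset (ℕ × ℕ)} {i j : ℕ} : j ∈ Nbr E i ↔ (i, j) ∈ E := by
  simp only [Nbr, Finset.mem_image, Finset.mem_filter]
  constructor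
  · rintro ⟨⟨p1, p2⟩, ⟨hp, rfl⟩, rfl⟩; exact hp
  · intro h; exact ⟨(i, j), ⟨h, rfl⟩, rfl⟩

lemma mem_Nbr' {E : Finset (ℕ × ℕ)} {i j : ℕ} : i ∈ Nbr' E j ↔ (i, j) ∈ E := by
  simp only [Nbr', Finset.mem_image, Finset.mem_filter]
  constructor
  · rintro ⟨⟨p1, p2⟩, ⟨hp, rfl⟩, rfl⟩; exact hp
  · intro h; exact ⟨(i, j), ⟨h, rfl⟩, rfl⟩

lemma exists_safe_a {E : Finset (ℕ × ℕ)} {C : Set Route} (hC : IsClique E C) (i j : ℕ) :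
    ∃ a, (a = 1 ∨ a = 2) ∧ ∀ r' ∈ C, r'.2.1.1 = i →
      ¬((j < r'.2.1.2 ∧ r'.1 = 1 ∧ a = 2) ∨ (r'.2.1.2 < j ∧ a = 1 ∧ r'.1 = 2)) := by
  by_cases h2 : ∃ r' ∈ C, r'.2.1.1 = i ∧ r'.2.1.2 < j ∧ r'.1 = 2
  · obtain ⟨w, hw, hwi, hwj, hwa⟩ := h2
    refine ⟨2, Or.inr rfl, ?_⟩
    rintro r' hr' hi (⟨hj, ha1, -⟩ | ⟨-, h1, -⟩)
    · exact hC.2 w hw r' hr' (fun he => by rw [he] at hwa; omega)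
        (Or.inr (Or.inl ⟨by rw [hwi, hi], by omega, Or.inl ⟨by omega, ha1, hwa⟩⟩))
    · omega
  · refine ⟨1, Or.inl rfl, ?_⟩
    rintro r' hr' hi (⟨-, -, h⟩ | ⟨hj, -, ha⟩)
    · omega
    · exact h2 ⟨r', hr', hi, hj, ha⟩

lemma exists_safe_c {E : Finset (ℕ × ℕ)} {C : Set Route} (hC : IsClique E C) (i j : ℕ) :
    ∃ c, (c = 1 ∨ c = 2) ∧ ∀ r' ∈ C, r'.2.1.2 = j →
      ¬((i < r'.2.1.1 ∧ c = 2 ∧ r'.2.2 = 1) ∨ (r'.2.1.1 < i ∧ r'.2.2 = 2 ∧ c = 1)) := by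
  by_cases h2 : ∃ r' ∈ C, r'.2.1.2 = j ∧ r'.2.1.1 < i ∧ r'.2.2 = 2
  · obtain ⟨w, hw, hwj, hwi, hwc⟩ := h2
    refine ⟨2, Or.inr rfl, ?_⟩
    rintro r' hr' hj (⟨hi, -, hc1⟩ | ⟨-, -, h1⟩)
    · exact hC.2 w hw r' hr' (fun he => by rw [he] at hwc; omega)
        (Or.inr (Or.inr ⟨by rw [hwj, hj], by omega, Or.inl ⟨by omega, hwc, hc1⟩⟩))
    · omega
  · refine ⟨1, Or.inl rfl, ?_⟩
    rintro r' hr' hj (⟨-, h, -⟩ | ⟨hi, hc, -⟩)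
    · omega
    · exact h2 ⟨r', hr', hj, hi, hc⟩

lemma exists_route_at {E : Finset (ℕ × ℕ)} {C : Set Route} (hC : IsMaxClique E C)
    {e : ℕ × ℕ} (he : e ∈ E) :
    (1, e, 1) ∈ C ∨ (1, e, 2) ∈ C ∨ (2, e, 1) ∈ C ∨ (2, e, 2) ∈ C := by
  by_contra hno
  push_neg at hno
  obtain ⟨h11, h12, h21, h22⟩ := hno
  have hmid : ∀ r' ∈ C, r'.2.1 ≠ e := by
    rintro ⟨a, ⟨i', j'⟩, c⟩ hr' hmid
    obtain ⟨ha, -, hc⟩ := hC.1.1 _ hr'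
    simp only at hmid ha hc
    subst hmid
    rcases ha with rfl | rfl <;> rcases hc with rfl | rfl <;> tauto
  obtain ⟨a, ha, hsa⟩ := exists_safe_a hC.1 e.1 e.2
  obtain ⟨c, hc, hsc⟩ := exists_safe_c hC.1 e.1 e.2
  have hmem : (a, e, c) ∈ C := by
    apply mem_of_no_conflict hC ⟨ha, he, hc⟩
    intro r' hr' hconf
    rcases hconf with ⟨hm, -⟩ | ⟨hi, -, hd⟩ | ⟨hj, -, hd⟩
    · exact hmid r' hr' hm.symm
    · exact hsa r' hr' hi.symm hd
    · exact hsc r' hr' hj.symm hd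
  rcases ha with rfl | rfl <;> rcases hc with rfl | rfl <;> tauto

lemma not_both_bad {E : Finset (ℕ × ℕ)} {C : Set Route} (hC : IsClique E C)
    {e : ℕ × ℕ} (h12 : (1, e, 2) ∈ C) (h21 : (2, e, 1) ∈ C) : False := by
  apply hC.2 _ h12 _ h21 (by simp)
  exact Or.inl ⟨rfl, Or.inl ⟨rfl, rfl, rfl, rfl⟩⟩

lemma no_diag_only {E : Finset (ℕ × ℕ)} {C : Set Route} (hC : IsMaxClique E C)
    {e : ℕ × ℕ} (h11 : (1, e, 1) ∈ C) (h22 : (2, e, 2) ∈ C)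
    (h12 : (1, e, 2) ∉ C) (h21 : (2, e, 1) ∉ C) : False := by
  have he : e ∈ E := (hC.1.1 _ h11).2.1
  apply h12
  apply mem_of_no_conflict hC ⟨Or.inl rfl, he, Or.inr rfl⟩
  rintro ⟨a', ⟨i', j'⟩, c'⟩ hr' hconf
  rcases hconf with ⟨hm, hd⟩ | ⟨hi, hne, hd⟩ | ⟨hj, hne, hd⟩
  · simp only at hm hd
    rcases hd with ⟨-, -, ha', hc'⟩ | ⟨h, -⟩
    · subst ha'; subst hc'; rw [← hm] at hr'; exact h21 hr'
    · simp at h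
  · simp only at hi hne hd
    rcases hd with ⟨-, -, h⟩ | ⟨hj', -, ha'⟩
    · simp at h
    · exact hC.1.2 _ h11 _ hr' (fun h => hne (congrArg (fun r : Route => r.2.1.2) h))
        (Or.inr (Or.inl ⟨hi, hne, Or.inr ⟨hj', rfl, ha'⟩⟩))
  · simp only at hj hne hd
    rcases hd with ⟨hi', -, hc'⟩ | ⟨-, -, h⟩
    · exact hC.1.2 _ h22 _ hr' (fun h => hne (congrArg (fun r : Route => r.2.1.1) h))
        (Or.inr (Or.inr ⟨hj, hne, Or.inl ⟨hi', rfl, hc'⟩⟩))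
    · simp at h

lemma row_double {E : Finset (ℕ × ℕ)} {C : Set Route} (hC : IsMaxClique E C)
    {i : ℕ} (hin : (Nbr E i).Nonempty) :
    ∃ e ∈ E, e.1 = i ∧ ((1, e, 1) ∈ C ∨ (1, e, 2) ∈ C) ∧ ((2, e, 1) ∈ C ∨ (2, e, 2) ∈ C) := by
  classical
  -- Step 1: there is a route with a = 2 in row i.
  have hex2 : ∃ r ∈ C, r.2.1.1 = i ∧ r.1 = 2 := by
    by_contra hno
    push_neg at hno
    set j0 := (Nbr E i).max' hin with hj0
    have hje : (i, j0) ∈ E := mem_Nbr.1 ((Nbr E i).max'_mem hin)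
    have hle : ∀ r' ∈ C, r'.2.1.1 = i → r'.2.1.2 ≤ j0 := by
      rintro ⟨a', ⟨i', j'⟩, c'⟩ hr' hi'
      simp only at hi' ⊢
      subst hi'
      exact Finset.le_max' _ _ (mem_Nbr.2 (hC.1.1 _ hr').2.1)
    by_cases hc2 : (1, ((i, j0) : ℕ × ℕ), (2 : ℕ)) ∈ C ∨ (2, ((i, j0) : ℕ × ℕ), (2 : ℕ)) ∈ C
    · -- there is a route with c = 2 at (i, j0); add (2,(i,j0),2)
      have hmem : ((2 : ℕ), ((i, j0) : ℕ × ℕ), (2 : ℕ)) ∈ C := by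
        apply mem_of_no_conflict hC ⟨Or.inr rfl, hje, Or.inr rfl⟩
        rintro ⟨a', ⟨i', j'⟩, c'⟩ hr' hconf
        rcases hconf with ⟨hm, hd⟩ | ⟨hi', hne, hd⟩ | ⟨hj', hne, hd⟩
        · simp only at hd; omega
        · simp only at hi' hne hd
          rcases hd with ⟨hlt, -, -⟩ | ⟨-, h, -⟩
          · have := hle _ hr' hi'.symm; simp only at this; omega
          · omega
        · simp only at hj' hne hd
          rcases hd with ⟨hlt, -, hc'1⟩ | ⟨-, -, h⟩
          · rcases hc2 with hw | hw
            · exact hC.1.2 _ hw _ hr' (fun h => hne (congrArg (fun r : Route => r.2.1.1) h))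
                (Or.inr (Or.inr ⟨hj', hne, Or.inl ⟨hlt, rfl, hc'1⟩⟩))
            · exact hC.1.2 _ hw _ hr' (fun h => hne (congrArg (fun r : Route => r.2.1.1) h))
                (Or.inr (Or.inr ⟨hj', hne, Or.inl ⟨hlt, rfl, hc'1⟩⟩))
          · omega
      exact absurd rfl (hno _ hmem rfl)
    · push_neg at hc2
      obtain ⟨h12n, h22n⟩ := hc2
      have hw1 : ((1 : ℕ), ((i, j0) : ℕ × ℕ), (1 : ℕ)) ∈ C ∨
          ((2 : ℕ), ((i, j0) : ℕ × ℕ), (1 : ℕ)) ∈ C := by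
        rcases exists_route_at hC hje with h | h | h | h
        · exact Or.inl h
        · exact absurd h h12n
        · exact Or.inr h
        · exact absurd h h22n
      have hmem : ((2 : ℕ), ((i, j0) : ℕ × ℕ), (1 : ℕ)) ∈ C := by
        apply mem_of_no_conflict hC ⟨Or.inr rfl, hje, Or.inl rfl⟩
        rintro ⟨a', ⟨i', j'⟩, c'⟩ hr' hconf
        rcases hconf with ⟨hm, hd⟩ | ⟨hi', hne, hd⟩ | ⟨hj', hne, hd⟩
        · simp only at hm hd
          rcases hd with ⟨h, -⟩ | ⟨-, -, ha', hc'⟩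
          · omega
          · subst ha'; subst hc'; rw [← hm] at hr'; exact h12n hr'
        · simp only at hi' hne hd
          rcases hd with ⟨hlt, -, -⟩ | ⟨-, h, -⟩
          · have := hle _ hr' hi'.symm; simp only at this; omega
          · omega
        · simp only at hj' hne hd
          rcases hd with ⟨-, h, -⟩ | ⟨hlt, hc'2, -⟩
          · omega
          · rcases hw1 with hw | hw
            · exact hC.1.2 _ hr' _ hw (fun h => hne (congrArg (fun r : Route => r.2.1.1) h).symm)
                (Or.inr (Or.inr ⟨hj'.symm, fun h => hne h.symm, Or.inl ⟨hlt, hc'2, rfl⟩⟩))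
            · exact hC.1.2 _ hr' _ hw (fun h => hne (congrArg (fun r : Route => r.2.1.1) h).symm)
                (Or.inr (Or.inr ⟨hj'.symm, fun h => hne h.symm, Or.inl ⟨hlt, hc'2, rfl⟩⟩))
      exact absurd rfl (hno _ hmem rfl)
  -- Step 2: take the least column of row i carrying a route with a = 2.
  obtain ⟨⟨aw, ⟨iw, jw⟩, cw⟩, hw, hwi, hwa⟩ := hex2
  simp only at hwi hwa
  rw [hwi, hwa] at hw
  have hSne : jw ∈ {j | ∃ c', ((2 : ℕ), ((i, j) : ℕ × ℕ), c') ∈ C} := ⟨cw, hw⟩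
  set S := {j | ∃ c', ((2 : ℕ), ((i, j) : ℕ × ℕ), c') ∈ C} with hS
  have hmemS : sInf S ∈ S := Nat.sInf_mem ⟨jw, hSne⟩
  set j2 := sInf S with hj2
  obtain ⟨c2, hc2mem⟩ := hmemS
  have hmin : ∀ j ∈ S, j2 ≤ j := fun j hj => Nat.sInf_le hj
  have he2 : (i, j2) ∈ E := (hC.1.1 _ hc2mem).2.1
  have hc212 : c2 = 1 ∨ c2 = 2 := (hC.1.1 _ hc2mem).2.2
  have harow2 : ((2 : ℕ), ((i, j2) : ℕ × ℕ), (1 : ℕ)) ∈ C ∨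
      ((2 : ℕ), ((i, j2) : ℕ × ℕ), (2 : ℕ)) ∈ C := by
    rcases hc212 with rfl | rfl
    · exact Or.inl hc2mem
    · exact Or.inr hc2mem
  by_cases hc1 : ((1 : ℕ), ((i, j2) : ℕ × ℕ), (1 : ℕ)) ∈ C ∨ ((2 : ℕ), ((i, j2) : ℕ × ℕ), (1 : ℕ)) ∈ C
  · have hmem : ((1 : ℕ), ((i, j2) : ℕ × ℕ), (1 : ℕ)) ∈ C := by
      apply mem_of_no_conflict hC ⟨Or.inl rfl, he2, Or.inl rfl⟩
      rintro ⟨a', ⟨i', j'⟩, c'⟩ hr' hconf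
      rcases hconf with ⟨hm, hd⟩ | ⟨hi', hne, hd⟩ | ⟨hj', hne, hd⟩
      · simp only at hd; omega
      · simp only at hi' hne hd
        rcases hd with ⟨-, -, h⟩ | ⟨hlt, -, ha'2⟩
        · omega
        · subst ha'2
          have : j' ∈ S := ⟨c', by rw [hi']; exact hr'⟩
          have := hmin _ this; omega
      · simp only at hj' hne hd
        rcases hd with ⟨-, h, -⟩ | ⟨hlt, hc'2, -⟩
        · omega
        · rcases hc1 with hw0 | hw0
          · exact hC.1.2 _ hr' _ hw0 (fun h => hne (congrArg (fun r : Route => r.2.1.1) h).symm)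
              (Or.inr (Or.inr ⟨hj'.symm, fun h => hne h.symm, Or.inl ⟨hlt, hc'2, rfl⟩⟩))
          · exact hC.1.2 _ hr' _ hw0 (fun h => hne (congrArg (fun r : Route => r.2.1.1) h).symm)
              (Or.inr (Or.inr ⟨hj'.symm, fun h => hne h.symm, Or.inl ⟨hlt, hc'2, rfl⟩⟩))
    exact ⟨(i, j2), he2, rfl, Or.inl hmem, harow2⟩
  · push_neg at hc1
    obtain ⟨hn11, hn21⟩ := hc1
    have hcw2 : ((2 : ℕ), ((i, j2) : ℕ × ℕ), (2 : ℕ)) ∈ C := by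
      rcases hc212 with rfl | rfl
      · exact absurd hc2mem hn21
      · exact hc2mem
    have hmem : ((1 : ℕ), ((i, j2) : ℕ × ℕ), (2 : ℕ)) ∈ C := by
      apply mem_of_no_conflict hC ⟨Or.inl rfl, he2, Or.inr rfl⟩
      rintro ⟨a', ⟨i', j'⟩, c'⟩ hr' hconf
      rcases hconf with ⟨hm, hd⟩ | ⟨hi', hne, hd⟩ | ⟨hj', hne, hd⟩
      · simp only at hm hd
        rcases hd with ⟨-, -, ha', hc'⟩ | ⟨h, -⟩
        · subst ha'; subst hc'; rw [← hm] at hr'; exact hn21 hr'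
        · omega
      · simp only at hi' hne hd
        rcases hd with ⟨-, -, h⟩ | ⟨hlt, -, ha'2⟩
        · omega
        · subst ha'2
          have : j' ∈ S := ⟨c', by rw [hi']; exact hr'⟩
          have := hmin _ this; omega
      · simp only at hj' hne hd
        rcases hd with ⟨hlt, -, hc'1⟩ | ⟨-, -, h⟩
        · exact hC.1.2 _ hcw2 _ hr' (fun h => hne (congrArg (fun r : Route => r.2.1.1) h))
            (Or.inr (Or.inr ⟨hj', hne, Or.inl ⟨hlt, rfl, hc'1⟩⟩))
        · omega
    exact ⟨(i, j2), he2, rfl, Or.inr hmem, harow2⟩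

lemma col_double {E : Finset (ℕ × ℕ)} {C : Set Route} (hC : IsMaxClique E C)
    {j : ℕ} (hin : (Nbr' E j).Nonempty) :
    ∃ e ∈ E, e.2 = j ∧ ((1, e, 1) ∈ C ∨ (2, e, 1) ∈ C) ∧ ((1, e, 2) ∈ C ∨ (2, e, 2) ∈ C) := by
  classical
  -- Step 1: there is a route with c = 2 in column j.
  have hex2 : ∃ r ∈ C, r.2.1.2 = j ∧ r.2.2 = 2 := by
    by_contra hno
    push_neg at hno
    set i0 := (Nbr' E j).max' hin with hi0
    have hje : (i0, j) ∈ E := mem_Nbr'.1 ((Nbr' E j).max'_mem hin)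
    have hle : ∀ r' ∈ C, r'.2.1.2 = j → r'.2.1.1 ≤ i0 := by
      rintro ⟨a', ⟨i', j'⟩, c'⟩ hr' hj'
      simp only at hj' ⊢
      subst hj'
      exact Finset.le_max' _ _ (mem_Nbr'.2 (hC.1.1 _ hr').2.1)
    by_cases ha2 : (2, ((i0, j) : ℕ × ℕ), (1 : ℕ)) ∈ C ∨ (2, ((i0, j) : ℕ × ℕ), (2 : ℕ)) ∈ C
    · have hmem : ((2 : ℕ), ((i0, j) : ℕ × ℕ), (2 : ℕ)) ∈ C := by
        apply mem_of_no_conflict hC ⟨Or.inr rfl, hje, Or.inr rfl⟩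
        rintro ⟨a', ⟨i', j'⟩, c'⟩ hr' hconf
        rcases hconf with ⟨hm, hd⟩ | ⟨hi', hne, hd⟩ | ⟨hj', hne, hd⟩
        · simp only at hd; omega
        · simp only at hi' hne hd
          rcases hd with ⟨hlt, ha'1, -⟩ | ⟨-, h, -⟩
          · rcases ha2 with hw | hw
            · exact hC.1.2 _ hw _ hr' (fun h => hne (congrArg (fun r : Route => r.2.1.2) h))
                (Or.inr (Or.inl ⟨hi', hne, Or.inl ⟨hlt, ha'1, rfl⟩⟩))
            · exact hC.1.2 _ hw _ hr' (fun h => hne (congrArg (fun r : Route => r.2.1.2) h))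
                (Or.inr (Or.inl ⟨hi', hne, Or.inl ⟨hlt, ha'1, rfl⟩⟩))
          · omega
        · simp only at hj' hne hd
          rcases hd with ⟨hlt, -, -⟩ | ⟨-, -, h⟩
          · have := hle _ hr' hj'.symm; simp only at this; omega
          · omega
      exact absurd rfl (hno _ hmem rfl)
    · push_neg at ha2
      obtain ⟨h21n, h22n⟩ := ha2
      have hw1 : ((1 : ℕ), ((i0, j) : ℕ × ℕ), (1 : ℕ)) ∈ C ∨
          ((1 : ℕ), ((i0, j) : ℕ × ℕ), (2 : ℕ)) ∈ C := by
        rcases exists_route_at hC hje with h | h | h | h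
        · exact Or.inl h
        · exact Or.inr h
        · exact absurd h h21n
        · exact absurd h h22n
      have hmem : ((1 : ℕ), ((i0, j) : ℕ × ℕ), (2 : ℕ)) ∈ C := by
        apply mem_of_no_conflict hC ⟨Or.inl rfl, hje, Or.inr rfl⟩
        rintro ⟨a', ⟨i', j'⟩, c'⟩ hr' hconf
        rcases hconf with ⟨hm, hd⟩ | ⟨hi', hne, hd⟩ | ⟨hj', hne, hd⟩
        · simp only at hm hd
          rcases hd with ⟨-, -, ha', hc'⟩ | ⟨h, -⟩
          · subst ha'; subst hc'; rw [← hm] at hr'; exact h21n hr'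
          · omega
        · simp only at hi' hne hd
          rcases hd with ⟨-, -, h⟩ | ⟨hlt, -, ha'2⟩
          · omega
          · rcases hw1 with hw | hw
            · exact hC.1.2 _ hr' _ hw (fun h => hne (congrArg (fun r : Route => r.2.1.2) h).symm)
                (Or.inr (Or.inl ⟨hi'.symm, fun h => hne h.symm, Or.inl ⟨hlt, rfl, ha'2⟩⟩))
            · exact hC.1.2 _ hr' _ hw (fun h => hne (congrArg (fun r : Route => r.2.1.2) h).symm)
                (Or.inr (Or.inl ⟨hi'.symm, fun h => hne h.symm, Or.inl ⟨hlt, rfl, ha'2⟩⟩))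
        · simp only at hj' hne hd
          rcases hd with ⟨hlt, -, -⟩ | ⟨-, -, h⟩
          · have := hle _ hr' hj'.symm; simp only at this; omega
          · omega
      exact absurd rfl (hno _ hmem rfl)
  -- Step 2: take the least row of column j carrying a route with c = 2.
  obtain ⟨⟨aw, ⟨iw, jw⟩, cw⟩, hw, hwj, hwc⟩ := hex2
  simp only at hwj hwc
  rw [hwj, hwc] at hw
  have hSne : iw ∈ {i' | ∃ a', (a', ((i', j) : ℕ × ℕ), (2 : ℕ)) ∈ C} := ⟨aw, hw⟩
  set S := {i' | ∃ a', (a', ((i', j) : ℕ × ℕ), (2 : ℕ)) ∈ C} with hS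
  have hmemS : sInf S ∈ S := Nat.sInf_mem ⟨iw, hSne⟩
  set i2 := sInf S with hi2
  obtain ⟨a2, ha2mem⟩ := hmemS
  have hmin : ∀ i' ∈ S, i2 ≤ i' := fun i' hi' => Nat.sInf_le hi'
  have he2 : (i2, j) ∈ E := (hC.1.1 _ ha2mem).2.1
  have ha212 : a2 = 1 ∨ a2 = 2 := (hC.1.1 _ ha2mem).1
  have hccol2 : ((1 : ℕ), ((i2, j) : ℕ × ℕ), (2 : ℕ)) ∈ C ∨
      ((2 : ℕ), ((i2, j) : ℕ × ℕ), (2 : ℕ)) ∈ C := by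
    rcases ha212 with rfl | rfl
    · exact Or.inl ha2mem
    · exact Or.inr ha2mem
  by_cases ha1 : ((1 : ℕ), ((i2, j) : ℕ × ℕ), (1 : ℕ)) ∈ C ∨ ((1 : ℕ), ((i2, j) : ℕ × ℕ), (2 : ℕ)) ∈ C
  · have hmem : ((1 : ℕ), ((i2, j) : ℕ × ℕ), (1 : ℕ)) ∈ C := by
      apply mem_of_no_conflict hC ⟨Or.inl rfl, he2, Or.inl rfl⟩
      rintro ⟨a', ⟨i', j'⟩, c'⟩ hr' hconf
      rcases hconf with ⟨hm, hd⟩ | ⟨hi', hne, hd⟩ | ⟨hj', hne, hd⟩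
      · simp only at hd; omega
      · simp only at hi' hne hd
        rcases hd with ⟨-, -, h⟩ | ⟨hlt, -, ha'2⟩
        · omega
        · rcases ha1 with hw0 | hw0
          · exact hC.1.2 _ hr' _ hw0 (fun h => hne (congrArg (fun r : Route => r.2.1.2) h).symm)
              (Or.inr (Or.inl ⟨hi'.symm, fun h => hne h.symm, Or.inl ⟨hlt, rfl, ha'2⟩⟩))
          · exact hC.1.2 _ hr' _ hw0 (fun h => hne (congrArg (fun r : Route => r.2.1.2) h).symm)
              (Or.inr (Or.inl ⟨hi'.symm, fun h => hne h.symm, Or.inl ⟨hlt, rfl, ha'2⟩⟩))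
      · simp only at hj' hne hd
        rcases hd with ⟨-, h, -⟩ | ⟨hlt, hc'2, -⟩
        · omega
        · subst hc'2
          have : i' ∈ S := ⟨a', by rw [hj']; exact hr'⟩
          have := hmin _ this; omega
    exact ⟨(i2, j), he2, rfl, Or.inl hmem, hccol2⟩
  · push_neg at ha1
    obtain ⟨hn11, hn12⟩ := ha1
    have hcw : ((2 : ℕ), ((i2, j) : ℕ × ℕ), (2 : ℕ)) ∈ C := by
      rcases ha212 with rfl | rfl
      · exact absurd ha2mem hn12
      · exact ha2mem
    have hmem : ((2 : ℕ), ((i2, j) : ℕ × ℕ), (1 : ℕ)) ∈ C := by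
      apply mem_of_no_conflict hC ⟨Or.inr rfl, he2, Or.inl rfl⟩
      rintro ⟨a', ⟨i', j'⟩, c'⟩ hr' hconf
      rcases hconf with ⟨hm, hd⟩ | ⟨hi', hne, hd⟩ | ⟨hj', hne, hd⟩
      · simp only at hm hd
        rcases hd with ⟨h, -⟩ | ⟨-, -, ha', hc'⟩
        · omega
        · subst ha'; subst hc'; rw [← hm] at hr'; exact hn12 hr'
      · simp only at hi' hne hd
        rcases hd with ⟨hlt, ha'1, -⟩ | ⟨-, h, -⟩
        · exact hC.1.2 _ hcw _ hr' (fun h => hne (congrArg (fun r : Route => r.2.1.2) h))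
            (Or.inr (Or.inl ⟨hi', hne, Or.inl ⟨hlt, ha'1, rfl⟩⟩))
        · omega
      · simp only at hj' hne hd
        rcases hd with ⟨hlt, h, -⟩ | ⟨hlt, hc'2, -⟩
        · omega
        · subst hc'2
          have : i' ∈ S := ⟨a', by rw [hj']; exact hr'⟩
          have := hmin _ this; omega
    exact ⟨(i2, j), he2, rfl, Or.inr hmem, hccol2⟩

open Classical in
noncomputable def Fib (C : Set Route) (e : ℕ × ℕ) : Finset Route :=
  Finset.filter (· ∈ C) {(1,e,1),(1,e,2),(2,e,1),(2,e,2)}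

open Classical in
noncomputable def rA (C : Set Route) (e : ℕ × ℕ) : ℕ :=
  (if (1,e,1) ∈ C ∨ (1,e,2) ∈ C then 1 else 0) + (if (2,e,1) ∈ C ∨ (2,e,2) ∈ C then 1 else 0)

open Classical in
noncomputable def cA (C : Set Route) (e : ℕ × ℕ) : ℕ :=
  (if (1,e,1) ∈ C ∨ (2,e,1) ∈ C then 1 else 0) + (if (1,e,2) ∈ C ∨ (2,e,2) ∈ C then 1 else 0)

open Classical in
lemma Fib_card (C : Set Route) (e : ℕ × ℕ) :
    (Fib C e).card = (if (1,e,1) ∈ C then 1 else 0) + ((if (1,e,2) ∈ C then 1 else 0)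
      + ((if (2,e,1) ∈ C then 1 else 0) + (if (2,e,2) ∈ C then 1 else 0))) := by
  rw [Fib, Finset.card_filter]
  rw [show ({(1,e,1),(1,e,2),(2,e,1),(2,e,2)} : Finset Route)
      = insert (1,e,1) (insert (1,e,2) (insert (2,e,1) {(2,e,2)})) from rfl]
  rw [Finset.sum_insert (by simp [Prod.ext_iff]), Finset.sum_insert (by simp [Prod.ext_iff]),
    Finset.sum_insert (by simp [Prod.ext_iff]), Finset.sum_singleton]

lemma mem_Fib_mid {C : Set Route} {e : ℕ × ℕ} {r : Route} (h : r ∈ Fib C e) : r.2.1 = e := by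
  classical
  rw [Fib, Finset.mem_filter] at h
  have := h.1
  simp only [Finset.mem_insert, Finset.mem_singleton] at this
  rcases this with rfl | rfl | rfl | rfl <;> rfl

lemma fib_card_eq {E : Finset (ℕ × ℕ)} {C : Set Route} (hC : IsMaxClique E C)
    {e : ℕ × ℕ} (he : e ∈ E) : (Fib C e).card + 1 = rA C e + cA C e := by
  classical
  have h4 := exists_route_at hC he
  have hbad : ¬(((1:ℕ), e, (2:ℕ)) ∈ C ∧ ((2:ℕ), e, (1:ℕ)) ∈ C) :=
    fun h => not_both_bad hC.1 h.1 h.2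
  by_cases h11 : (1,e,1) ∈ C <;> by_cases h12 : (1,e,2) ∈ C <;>
    by_cases h21 : (2,e,1) ∈ C <;> by_cases h22 : (2,e,2) ∈ C
  all_goals simp [Fib_card, rA, cA, h11, h12, h21, h22]
  all_goals first
    | exact hbad ⟨h12, h21⟩
    | exact no_diag_only hC h11 h22 h12 h21
    | tauto

lemma row_at_most_one {E : Finset (ℕ × ℕ)} {C : Set Route} (hcl : IsClique E C)
    {e e' : ℕ × ℕ} (hrow : e.1 = e'.1) (hne : e.2 ≠ e'.2) (hlt : e.2 < e'.2)
    (h2 : (2, e, 1) ∈ C ∨ (2, e, 2) ∈ C) (h1 : (1, e', 1) ∈ C ∨ (1, e', 2) ∈ C) : False := by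
  have conf : ∀ c c' : ℕ, Conflict ((2 : ℕ), e, c) ((1 : ℕ), e', c') :=
    fun c c' => Or.inr (Or.inl ⟨hrow, hne, Or.inl ⟨hlt, rfl, rfl⟩⟩)
  have ne : ∀ c c' : ℕ, ((2 : ℕ), e, c) ≠ ((1 : ℕ), e', c') :=
    fun c c' h => by simpa using congrArg (fun r : Route => r.1) h
  rcases h2 with hw | hw <;> rcases h1 with hw' | hw' <;>
    exact hcl.2 _ hw _ hw' (ne _ _) (conf _ _)

lemma col_at_most_one {E : Finset (ℕ × ℕ)} {C : Set Route} (hcl : IsClique E C)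
    {e e' : ℕ × ℕ} (hcol : e.2 = e'.2) (hne : e.1 ≠ e'.1) (hlt : e.1 < e'.1)
    (h2 : (1, e, 2) ∈ C ∨ (2, e, 2) ∈ C) (h1 : (1, e', 1) ∈ C ∨ (2, e', 1) ∈ C) : False := by
  have conf : ∀ a a' : ℕ, Conflict (a, e, (2 : ℕ)) (a', e', (1 : ℕ)) :=
    fun a a' => Or.inr (Or.inr ⟨hcol, hne, Or.inl ⟨hlt, rfl, rfl⟩⟩)
  have ne : ∀ a a' : ℕ, (a, e, (2 : ℕ)) ≠ (a', e', (1 : ℕ)) :=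
    fun a a' h => hne (congrArg (fun r : Route => r.2.1.1) h)
  rcases h2 with hw | hw <;> rcases h1 with hw' | hw' <;>
    exact hcl.2 _ hw _ hw' (ne _ _) (conf _ _)

open Classical in
lemma row_sum {E : Finset (ℕ × ℕ)} {C : Set Route} (hC : IsMaxClique E C)
    {i : ℕ} (hin : (Nbr E i).Nonempty) :
    ∑ e ∈ E.filter (fun e => e.1 = i), rA C e = (E.filter (fun e => e.1 = i)).card + 1 := by
  obtain ⟨e₀, he₀, he₀i, h1, h2⟩ := row_double hC hin
  have he₀f : e₀ ∈ E.filter (fun e => e.1 = i) := Finset.mem_filter.2 ⟨he₀, he₀i⟩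
  have hone : ∀ e ∈ E.filter (fun e => e.1 = i), rA C e =
      1 + (if (((1,e,1) ∈ C ∨ (1,e,2) ∈ C) ∧ ((2,e,1) ∈ C ∨ (2,e,2) ∈ C)) then 1 else 0) := by
    intro e he
    rw [Finset.mem_filter] at he
    have h4 := exists_route_at hC he.1
    rw [rA]
    by_cases hA : (1,e,1) ∈ C ∨ (1,e,2) ∈ C <;> by_cases hB : (2,e,1) ∈ C ∨ (2,e,2) ∈ C <;>
      simp [hA, hB] <;> tauto
  rw [Finset.sum_congr rfl hone, Finset.sum_add_distrib, Finset.sum_const, smul_eq_mul, mul_one]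
  congr 1
  rw [Finset.sum_eq_single_of_mem e₀ he₀f]
  · exact if_pos ⟨h1, h2⟩
  · intro b hb hbne
    rw [Finset.mem_filter] at hb
    refine if_neg (fun hboth => ?_)
    have hb2 : b.2 ≠ e₀.2 := by
      intro h
      exact hbne (Prod.ext (hb.2.trans he₀i.symm) h)
    rcases lt_or_gt_of_ne hb2 with hlt | hlt
    · exact row_at_most_one hC.1 (hb.2.trans he₀i.symm) hb2 hlt hboth.2 h1
    · exact row_at_most_one hC.1 (he₀i.trans hb.2.symm) (Ne.symm hb2) hlt h2 hboth.1

open Classical in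
lemma col_sum {E : Finset (ℕ × ℕ)} {C : Set Route} (hC : IsMaxClique E C)
    {j : ℕ} (hin : (Nbr' E j).Nonempty) :
    ∑ e ∈ E.filter (fun e => e.2 = j), cA C e = (E.filter (fun e => e.2 = j)).card + 1 := by
  obtain ⟨e₀, he₀, he₀j, h1, h2⟩ := col_double hC hin
  have he₀f : e₀ ∈ E.filter (fun e => e.2 = j) := Finset.mem_filter.2 ⟨he₀, he₀j⟩
  have hone : ∀ e ∈ E.filter (fun e => e.2 = j), cA C e =
      1 + (if (((1,e,1) ∈ C ∨ (2,e,1) ∈ C) ∧ ((1,e,2) ∈ C ∨ (2,e,2) ∈ C)) then 1 else 0) := by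
    intro e he
    rw [Finset.mem_filter] at he
    have h4 := exists_route_at hC he.1
    rw [cA]
    by_cases hA : (1,e,1) ∈ C ∨ (2,e,1) ∈ C <;> by_cases hB : (1,e,2) ∈ C ∨ (2,e,2) ∈ C <;>
      simp [hA, hB] <;> tauto
  rw [Finset.sum_congr rfl hone, Finset.sum_add_distrib, Finset.sum_const, smul_eq_mul, mul_one]
  congr 1
  rw [Finset.sum_eq_single_of_mem e₀ he₀f]
  · exact if_pos ⟨h1, h2⟩
  · intro b hb hbne
    rw [Finset.mem_filter] at hb
    refine if_neg (fun hboth => ?_)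
    have hb1 : b.1 ≠ e₀.1 := by
      intro h
      exact hbne (Prod.ext h (hb.2.trans he₀j.symm))
    rcases lt_or_gt_of_ne hb1 with hlt | hlt
    · exact col_at_most_one hC.1 (hb.2.trans he₀j.symm) hb1 hlt hboth.2 h1
    · exact col_at_most_one hC.1 (he₀j.trans hb.2.symm) (Ne.symm hb1) hlt h2 hboth.1


/-- Every maximal clique of routes has cardinality `n + m + |E|`. -/
theorem maxclique_card (n m : ℕ) (hn : 1 ≤ n) (hm : 1 ≤ m) (E : Finset (ℕ × ℕ))
    (hE : ∀ p ∈ E, 1 ≤ p.1 ∧ p.1 ≤ n ∧ 1 ≤ p.2 ∧ p.2 ≤ m)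
    (hdegS : ∀ i ∈ Finset.Icc 1 n, 2 ≤ (Nbr E i).card)
    (hdegT : ∀ j ∈ Finset.Icc 1 m, 2 ≤ (Nbr' E j).card) :
    ∀ C : Set Route, IsMaxClique E C → C.ncard = n + m + E.card := by
  classical
  intro C hC
  -- C is the union of the fibers over the edges
  have hmem : ∀ r : Route, r ∈ C ↔ r ∈ E.biUnion (fun e => Fib C e) := by
    intro r
    rw [Finset.mem_biUnion]
    constructor
    · intro hr
      obtain ⟨ha, he, hc⟩ := hC.1.1 r hr
      refine ⟨r.2.1, he, ?_⟩
      rw [Fib, Finset.mem_filter]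
      refine ⟨?_, hr⟩
      obtain ⟨a, ⟨i, j⟩, c⟩ := r
      simp only at ha hc ⊢
      simp only [Finset.mem_insert, Finset.mem_singleton]
      rcases ha with rfl | rfl <;> rcases hc with rfl | rfl <;> tauto
    · rintro ⟨e, -, hr⟩
      rw [Fib, Finset.mem_filter] at hr
      exact hr.2
  have hncard : C.ncard = (E.biUnion (fun e => Fib C e)).card := by
    set F := E.biUnion (fun e => Fib C e) with hF
    have hCF : C = ↑F := Set.ext fun r => by simpa using hmem r
    rw [hCF, Set.ncard_coe_finset]
  have hdisj : ∀ x ∈ E, ∀ y ∈ E, x ≠ y → Disjoint (Fib C x) (Fib C y) := by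
    intro x _ y _ hxy
    rw [Finset.disjoint_left]
    intro r hrx hry
    exact hxy ((mem_Fib_mid hrx).symm.trans (mem_Fib_mid hry))
  rw [Finset.card_biUnion hdisj] at hncard
  -- per-edge identity summed over E
  have hsum : ∑ e ∈ E, ((Fib C e).card + 1) = ∑ e ∈ E, (rA C e + cA C e) :=
    Finset.sum_congr rfl fun e he => fib_card_eq hC he
  rw [Finset.sum_add_distrib, Finset.sum_add_distrib, ← Finset.card_eq_sum_ones] at hsum
  -- row sums
  have hmapsS : ∀ e ∈ E, e.1 ∈ Finset.Icc 1 n :=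
    fun e he => Finset.mem_Icc.2 ⟨(hE e he).1, (hE e he).2.1⟩
  have hmapsT : ∀ e ∈ E, e.2 ∈ Finset.Icc 1 m :=
    fun e he => Finset.mem_Icc.2 ⟨(hE e he).2.2.1, (hE e he).2.2.2⟩
  have hrowcards : ∑ i ∈ Finset.Icc 1 n, (E.filter (fun e => e.1 = i)).card = E.card := by
    rw [Finset.card_eq_sum_ones E, ← Finset.sum_fiberwise_of_maps_to hmapsS (fun _ => 1)]
    exact Finset.sum_congr rfl fun i _ => Finset.card_eq_sum_ones _
  have hcolcards : ∑ j ∈ Finset.Icc 1 m, (E.filter (fun e => e.2 = j)).card = E.card := by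
    rw [Finset.card_eq_sum_ones E, ← Finset.sum_fiberwise_of_maps_to hmapsT (fun _ => 1)]
    exact Finset.sum_congr rfl fun j _ => Finset.card_eq_sum_ones _
  have hrA : ∑ e ∈ E, rA C e = E.card + n := by
    rw [← Finset.sum_fiberwise_of_maps_to hmapsS (rA C)]
    have : ∀ i ∈ Finset.Icc 1 n, ∑ e ∈ E.filter (fun e => e.1 = i), rA C e
        = (E.filter (fun e => e.1 = i)).card + 1 := by
      intro i hi
      have h2 := hdegS i hi
      exact row_sum hC (Finset.card_pos.1 (by omega))
    rw [Finset.sum_congr rfl this, Finset.sum_add_distrib, hrowcards, Finset.sum_const,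
      Nat.card_Icc, smul_eq_mul, mul_one]
    omega
  have hcA : ∑ e ∈ E, cA C e = E.card + m := by
    rw [← Finset.sum_fiberwise_of_maps_to hmapsT (cA C)]
    have : ∀ j ∈ Finset.Icc 1 m, ∑ e ∈ E.filter (fun e => e.2 = j), cA C e
        = (E.filter (fun e => e.2 = j)).card + 1 := by
      intro j hj
      have h2 := hdegT j hj
      exact col_sum hC (Finset.card_pos.1 (by omega))
    rw [Finset.sum_congr rfl this, Finset.sum_add_distrib, hcolcards, Finset.sum_const,
      Nat.card_Icc, smul_eq_mul, mul_one]
    omega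
  rw [hrA, hcA] at hsum
  omega
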